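/- If {Λ(t)} is a CP-divisible family of completely positive trace-nonincreasing maps (Λ(t₂) = Θ(t₂,t₁)∘Λ(t₁) with Θ(t₂,t₁) CP trace-nonincreasing for all t₂ ≥ t₁ ≥ 0), then the induced generalized erasure family Γ_Λ(t) ≔ Γ_{Λ(t)} is CP-divisible by trace-preserving maps: Γ_Λ(t₂) = Ξ(t₂,t₁)∘Γ_Λ(t₁) where Ξ(t₂,t₁) is the completely positive trace-preserving map built from Θ(t₂,t₁) as Ξ[(ρ,·;·,c)] = (Θ(t₂,t₁)[ρ], 0; 0, c + tr(ρ(I − Θ(t₂,t₁)†[I]))). -/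

import Mathlib

open Matrix
open scoped ComplexOrder

/-- The positive semidefinite square root (removed from Mathlib; restored with its old definition). -/
noncomputable def Matrix.PosSemidef.sqrt {n 𝕜 : Type*} [Fintype n] [DecidableEq n] [RCLike 𝕜]
    {A : Matrix n n 𝕜} (hA : A.PosSemidef) : Matrix n n 𝕜 :=
  (hA.1.eigenvectorUnitary : Matrix n n 𝕜) * diagonal ((↑) ∘ (Real.sqrt ∘ hA.1.eigenvalues)) *
    (star (hA.1.eigenvectorUnitary : Matrix n n 𝕜))

/-- The trace norm `‖A‖₁ = tr √(AᴴA)` of a complex square matrix. -/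
noncomputable def traceNorm {n : Type*} [Fintype n] [DecidableEq n]
    (A : Matrix n n ℂ) : ℝ :=
  ((Matrix.posSemidef_conjTranspose_mul_self A).sqrt.trace).re

/-- The blockwise extension `Id_n ⊗ Λ` of a map on matrices. -/
def blockApply {d e : Type*} (n : ℕ) (Λ : Matrix d d ℂ → Matrix e e ℂ)
    (M : Matrix (Fin n × d) (Fin n × d) ℂ) : Matrix (Fin n × e) (Fin n × e) ℂ :=
  fun p q => Λ (Matrix.of fun a b => M (p.1, a) (q.1, b)) p.2 q.2

/-- `Λ` is completely positive: `Id_n ⊗ Λ` maps positive semidefinite matrices to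
positive semidefinite matrices, for every `n`. -/
def IsCompletelyPositive {d e : Type*} [Fintype d] [Fintype e]
    (Λ : Matrix d d ℂ → Matrix e e ℂ) : Prop :=
  ∀ (n : ℕ) (M : Matrix (Fin n × d) (Fin n × d) ℂ),
    M.PosSemidef → (blockApply n Λ M).PosSemidef

/-- `Λ` is trace nonincreasing: `tr Λ[ρ] ≤ tr ρ` for every positive semidefinite `ρ`. -/
def IsTraceNonincreasing {d e : Type*} [Fintype d] [Fintype e]
    (Λ : Matrix d d ℂ → Matrix e e ℂ) : Prop :=
  ∀ ρ : Matrix d d ℂ, ρ.PosSemidef → (Λ ρ).trace.re ≤ ρ.trace.re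

/-- The generalized erasure extension `Γ_Λ[ρ] = Λ[ρ] ⊕ tr((I − Λ†[I])ρ)|e⟩⟨e|`. -/
noncomputable def erasureExt {d : Type*} [Fintype d] [DecidableEq d]
    (Λ Λd : Matrix d d ℂ → Matrix d d ℂ) (ρ : Matrix d d ℂ) :
    Matrix (d ⊕ Unit) (d ⊕ Unit) ℂ :=
  Matrix.fromBlocks (Λ ρ) 0 0
    ((((1 - Λd 1) * ρ).trace) • (1 : Matrix Unit Unit ℂ))

/-- The map `Ξ` built from `Θ`, acting on block operators over `H ⊕ ℂ`. -/
noncomputable def xiExt {d : Type*} [Fintype d] [DecidableEq d]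
    (Θ Θd : Matrix d d ℂ → Matrix d d ℂ)
    (M : Matrix (d ⊕ Unit) (d ⊕ Unit) ℂ) : Matrix (d ⊕ Unit) (d ⊕ Unit) ℂ :=
  Matrix.fromBlocks (Θ M.toBlocks₁₁) 0 0
    (M.toBlocks₂₂ + ((M.toBlocks₁₁ * (1 - Θd 1)).trace) • (1 : Matrix Unit Unit ℂ))

namespace Stmt16Aux

set_option linter.unusedSectionVars false
set_option maxHeartbeats 1000000

variable {d : Type*} [Fintype d] [DecidableEq d]

/-- trace of a PSD complex matrix is nonneg (in ℂ order). -/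
lemma psd_trace_nonneg {ρ : Matrix d d ℂ} (hρ : ρ.PosSemidef) : 0 ≤ ρ.trace := by
  have h : ∀ i, 0 ≤ ρ i i := fun i => by
    have := hρ.dotProduct_mulVec_nonneg (Pi.single i 1)
    simpa [dotProduct, mulVec, Pi.single_apply, Finset.sum_ite_eq, mul_comm] using this
  exact Finset.sum_nonneg fun i _ => h i

lemma quad_eq_trace (B : Matrix d d ℂ) (x : d → ℂ) :
    dotProduct (star x) (B *ᵥ x) = (vecMulVec x (star x) * B).trace := by
  simp only [dotProduct, mulVec, vecMulVec, Matrix.trace, Matrix.diag, Matrix.mul_apply,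
    of_apply, Finset.mul_sum, Finset.sum_mul, Pi.star_apply]
  rw [Finset.sum_comm]
  refine Finset.sum_congr rfl fun j _ => ?_
  refine Finset.sum_congr rfl fun k _ => ?_
  ring

lemma vecMulVec_posSemidef (x : d → ℂ) : (vecMulVec x (star x)).PosSemidef := by
  refine Matrix.PosSemidef.of_dotProduct_mulVec_nonneg ?_ ?_
  · ext i j
    simp [vecMulVec, mul_comm]
  · intro v
    have : dotProduct (star v) ((vecMulVec x (star x)) *ᵥ v)
        = star (dotProduct (star x) v) * (dotProduct (star x) v) := by
      simp only [dotProduct, mulVec, vecMulVec, of_apply, Pi.star_apply, star_sum, star_mul',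
        starRingEnd_apply, star_star, Finset.mul_sum, Finset.sum_mul]
      rw [Finset.sum_comm]
      refine Finset.sum_congr rfl fun j _ => ?_
      refine Finset.sum_congr rfl fun k _ => ?_
      ring
    rw [this]
    exact star_mul_self_nonneg _

/-- the trace-dual of a linear map on matrices -/
noncomputable def dualMap (Θ : Matrix d d ℂ →ₗ[ℂ] Matrix d d ℂ) :
    Matrix d d ℂ →ₗ[ℂ] Matrix d d ℂ where
  toFun Y := Matrix.of fun a b => (Θ (single b a 1) * Y).trace
  map_add' Y Z := by
    ext a b
    simp [Matrix.mul_add]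
  map_smul' c Y := by
    ext a b
    simp [Matrix.mul_smul]

lemma dual_spec (Θ : Matrix d d ℂ →ₗ[ℂ] Matrix d d ℂ) (X Y : Matrix d d ℂ) :
    (Θ X * Y).trace = (X * dualMap Θ Y).trace := by
  have hX : X = ∑ i, ∑ j, X i j • single i j (1 : ℂ) := by
    conv_lhs => rw [matrix_eq_sum_single X]
    refine Finset.sum_congr rfl fun i _ => Finset.sum_congr rfl fun j _ => ?_
    rw [smul_single, smul_eq_mul, mul_one]
  conv_lhs => rw [hX]
  rw [map_sum]
  simp only [map_sum, _root_.map_smul, Finset.sum_mul, Matrix.smul_mul, trace_sum, trace_smul]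
  rw [Matrix.trace]
  simp only [Matrix.diag, Matrix.mul_apply, dualMap, LinearMap.coe_mk, AddHom.coe_mk, of_apply,
    smul_eq_mul]

lemma cp_pos {e : Type*} [Fintype e] {Θ : Matrix d d ℂ → Matrix e e ℂ}
    (hΘ : IsCompletelyPositive Θ) {ρ : Matrix d d ℂ} (hρ : ρ.PosSemidef) :
    (Θ ρ).PosSemidef := by
  have h1 : (ρ.submatrix (Prod.snd : Fin 1 × d → d) Prod.snd).PosSemidef := hρ.submatrix _
  have h2 := hΘ 1 _ h1
  have h3 : Θ ρ = (blockApply 1 Θ (ρ.submatrix Prod.snd Prod.snd)).submatrix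
      (fun x : e => ((0 : Fin 1), x)) (fun x => (0, x)) := by
    rfl
  rw [h3]
  exact h2.submatrix _

lemma cp_conjTranspose {Θ : Matrix d d ℂ → Matrix d d ℂ}
    (hΘ : IsCompletelyPositive Θ) (X : Matrix d d ℂ) :
    Θ Xᴴ = (Θ X)ᴴ := by
  set K : Matrix d (Fin 2 × d) ℂ :=
    Matrix.of fun c p => if p.1 = 0 then (1 : Matrix d d ℂ) c p.2 else X c p.2 with hK
  have hM : (Kᴴ * K).PosSemidef := posSemidef_conjTranspose_mul_self K
  have h2 := (hΘ 2 (Kᴴ * K) hM).1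
  have hb01 : (Matrix.of fun a b => (Kᴴ * K) ((0 : Fin 2), a) ((1 : Fin 2), b)) = X := by
    ext a b
    simp [hK, Matrix.mul_apply, Matrix.one_apply, Finset.sum_ite_eq]
  have hb10 : (Matrix.of fun a b => (Kᴴ * K) ((1 : Fin 2), a) ((0 : Fin 2), b)) = Xᴴ := by
    ext a b
    simp [hK, Matrix.mul_apply, Matrix.one_apply, Finset.sum_ite_eq']
  ext y x
  have := congrFun (congrFun h2 ((1 : Fin 2), y)) ((0 : Fin 2), x)
  simp only [conjTranspose_apply, blockApply] at this ⊢
  rw [hb01] at this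
  rw [show (Matrix.of fun a b => (Kᴴ * K) (((1 : Fin 2), y).1, a) (((0 : Fin 2), x).1, b))
      = Xᴴ from hb10] at this
  exact this.symm ▸ rfl

lemma stdBasisMatrix_conjTranspose' (a b : d) :
    (single a b (1 : ℂ))ᴴ = single b a 1 := by
  ext i j
  simp [single, and_comm, apply_ite]

lemma one_sub_dual_posSemidef {Θ : Matrix d d ℂ →ₗ[ℂ] Matrix d d ℂ}
    (hcp : IsCompletelyPositive (⇑Θ)) (htni : IsTraceNonincreasing (⇑Θ)) :
    (1 - dualMap Θ 1).PosSemidef := by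
  refine Matrix.PosSemidef.of_dotProduct_mulVec_nonneg ?_ ?_
  · have h1 : (dualMap Θ 1).IsHermitian := by
      ext a b
      simp only [conjTranspose_apply, dualMap, LinearMap.coe_mk, AddHom.coe_mk, of_apply,
        Matrix.mul_one]
      rw [← Matrix.trace_conjTranspose, ← cp_conjTranspose hcp, stdBasisMatrix_conjTranspose']
    exact (Matrix.isHermitian_one).sub h1
  · intro x
    rw [quad_eq_trace]
    set ρ := vecMulVec x (star x) with hρdef
    have hρ : ρ.PosSemidef := vecMulVec_posSemidef x
    have hΘρ : (Θ ρ).PosSemidef := cp_pos hcp hρ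
    have htr : (ρ * (1 - dualMap Θ 1)).trace = ρ.trace - (Θ ρ).trace := by
      rw [Matrix.mul_sub, Matrix.mul_one, trace_sub]
      congr 1
      rw [← dual_spec Θ ρ 1, Matrix.mul_one]
    rw [htr]
    have h1 : 0 ≤ ρ.trace := psd_trace_nonneg hρ
    have h2 : 0 ≤ (Θ ρ).trace := psd_trace_nonneg hΘρ
    have h3 := htni ρ hρ
    rw [Complex.nonneg_iff] at h1 h2 ⊢
    constructor
    · simpa [Complex.sub_re] using sub_nonneg.mpr h3
    · simp [Complex.sub_im, ← h1.2, ← h2.2]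

lemma traceAgainst_posSemidef {n : ℕ} {B : Matrix d d ℂ} (hB : B.PosSemidef)
    {M : Matrix (Fin n × d) (Fin n × d) ℂ} (hM : M.PosSemidef) :
    (Matrix.of fun p q : Fin n × Unit =>
      ((Matrix.of fun a b => M (p.1, a) (q.1, b)) * B).trace).PosSemidef := by
  refine Matrix.PosSemidef.of_dotProduct_mulVec_nonneg ?_ ?_
  · ext p q
    simp only [conjTranspose_apply, of_apply, Matrix.trace, Matrix.diag, Matrix.mul_apply,
      star_sum, star_mul']
    rw [Finset.sum_comm]
    refine Finset.sum_congr rfl fun a _ => Finset.sum_congr rfl fun b _ => ?_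
    rw [← hM.1.apply, ← hB.1.apply, star_star, star_star, mul_comm]
  · intro v
    obtain ⟨S, hS⟩ : ∃ S : Matrix d d ℂ, B = Sᴴ * S := by
      open scoped MatrixOrder Matrix.Norms.L2Operator in
      exact CStarAlgebra.nonneg_iff_eq_star_mul_self.mp hB.nonneg
    set X : Matrix (Fin n × d) d ℂ :=
      Matrix.of fun pa c => v (pa.1, ()) * star (S c pa.2) with hXdef
    have hBentry : ∀ a b : d, B b a = ∑ c, star (S c b) * S c a := by
      intro a b
      rw [hS, Matrix.mul_apply]
      rfl
    have key : dotProduct (star v)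
        ((Matrix.of fun p q : Fin n × Unit =>
          ((Matrix.of fun a b => M (p.1, a) (q.1, b)) * B).trace) *ᵥ v)
        = (Xᴴ * M * X).trace := by
      have hrhs : (Xᴴ * M * X).trace
          = ∑ qb : Fin n × d, ∑ pa : Fin n × d,
              M pa qb * (star (v (pa.1, ())) * v (qb.1, ()) * B qb.2 pa.2) := by
        rw [Matrix.trace]
        simp only [Matrix.diag, Matrix.mul_apply, conjTranspose_apply, of_apply,
          Finset.sum_mul, X]
        rw [Finset.sum_comm]
        refine Finset.sum_congr rfl fun qb _ => ?_
        rw [Finset.sum_comm]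
        refine Finset.sum_congr rfl fun pa _ => ?_
        rw [hBentry, Finset.mul_sum, Finset.mul_sum]
        refine Finset.sum_congr rfl fun c _ => ?_
        simp only [star_mul', star_star]
        ring
      rw [hrhs]
      simp only [dotProduct, mulVec, of_apply, Matrix.trace, Matrix.diag, Matrix.mul_apply,
        Pi.star_apply, Finset.mul_sum, Finset.sum_mul]
      rw [Finset.sum_comm]
      rw [← Fintype.sum_prod_type']
      simp only [← Fintype.sum_prod_type']
      refine Fintype.sum_equiv
        ⟨fun t => ((t.1.1.1, t.2.2), (t.1.2.1, t.2.1)),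
         fun s => (((s.1.1, ()), (s.2.1, ())), (s.2.2, s.1.2)),
         fun t => rfl, fun s => rfl⟩ _ _ fun t => by
          simp only [Equiv.coe_fn_mk]
          rw [show ((t.1.2.1, ()) : Fin n × Unit) = t.1.2 from rfl,
              show ((t.1.1.1, ()) : Fin n × Unit) = t.1.1 from rfl]
          ring
    rw [key]
    exact psd_trace_nonneg (hM.conjTranspose_mul_mul_same X)

lemma posSemidef_fromBlocks {m n' : Type*} [Fintype m] [Fintype n']
    {A : Matrix m m ℂ} {D : Matrix n' n' ℂ} (hA : A.PosSemidef) (hD : D.PosSemidef) :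
    (fromBlocks A 0 0 D).PosSemidef := by
  refine Matrix.PosSemidef.of_dotProduct_mulVec_nonneg ?_ ?_
  · unfold Matrix.IsHermitian
    rw [fromBlocks_conjTranspose]
    simp [hA.1.eq, hD.1.eq]
  · intro x
    have hx : x = Sum.elim (x ∘ Sum.inl) (x ∘ Sum.inr) := by
      ext (i | i) <;> rfl
    rw [hx, fromBlocks_mulVec]
    simp only [Matrix.zero_mulVec, add_zero, zero_add, Function.star_sumElim,
      sumElim_dotProduct_sumElim, Sum.elim_comp_inl, Sum.elim_comp_inr]
    exact add_nonneg (hA.dotProduct_mulVec_nonneg _) (hD.dotProduct_mulVec_nonneg _)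

lemma trace_fromBlocks' {m n' : Type*} [Fintype m] [Fintype n']
    (A : Matrix m m ℂ) (B : Matrix m n' ℂ) (C : Matrix n' m ℂ) (D : Matrix n' n' ℂ) :
    (fromBlocks A B C D).trace = A.trace + D.trace := by
  simp [Matrix.trace, Fintype.sum_sum_type, fromBlocks, Matrix.diag]


lemma xi_cp {Θ : Matrix d d ℂ →ₗ[ℂ] Matrix d d ℂ}
    (hcp : IsCompletelyPositive (⇑Θ)) (htni : IsTraceNonincreasing (⇑Θ)) :
    IsCompletelyPositive (xiExt (⇑Θ) (⇑(dualMap Θ))) := by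
  intro n M hM
  have hB : (1 - dualMap Θ 1).PosSemidef := one_sub_dual_posSemidef hcp htni
  set f : Fin n × d → Fin n × (d ⊕ Unit) := fun pa => (pa.1, Sum.inl pa.2) with hf
  set g : Fin n × Unit → Fin n × (d ⊕ Unit) := fun pu => (pu.1, Sum.inr pu.2) with hg
  have hM₁ : (M.submatrix f f).PosSemidef := hM.submatrix f
  have hM₂ : (M.submatrix g g).PosSemidef := hM.submatrix g
  have hK₁ : (blockApply n (⇑Θ) (M.submatrix f f)).PosSemidef := hcp n _ hM₁
  have hT : (Matrix.of fun p q : Fin n × Unit =>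
      ((Matrix.of fun a b => (M.submatrix f f) (p.1, a) (q.1, b)) * (1 - dualMap Θ 1)).trace).PosSemidef :=
    traceAgainst_posSemidef hB hM₁
  set e : Fin n × (d ⊕ Unit) → (Fin n × d) ⊕ (Fin n × Unit) := fun px =>
    match px.2 with
    | Sum.inl a => Sum.inl (px.1, a)
    | Sum.inr u => Sum.inr (px.1, u)
  have heq : blockApply n (xiExt (⇑Θ) (⇑(dualMap Θ))) M
      = (fromBlocks (blockApply n (⇑Θ) (M.submatrix f f)) 0 0
          ((M.submatrix g g) + Matrix.of fun p q : Fin n × Unit =>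
            ((Matrix.of fun a b => (M.submatrix f f) (p.1, a) (q.1, b)) * (1 - dualMap Θ 1)).trace)).submatrix e e := by
    ext ⟨p, x⟩ ⟨q, y⟩
    cases x <;> cases y <;>
      simp [blockApply, xiExt, Matrix.fromBlocks, Matrix.toBlocks₁₁, Matrix.toBlocks₂₂,
        Matrix.submatrix_apply, Matrix.one_apply, Matrix.add_apply, Matrix.smul_apply,
        smul_eq_mul, e, f, g]
  rw [heq]
  exact (posSemidef_fromBlocks hK₁ (hM₂.add hT)).submatrix e

lemma xi_trace (Θ : Matrix d d ℂ →ₗ[ℂ] Matrix d d ℂ)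
    (M : Matrix (d ⊕ Unit) (d ⊕ Unit) ℂ) :
    (xiExt (⇑Θ) (⇑(dualMap Θ)) M).trace = M.trace := by
  have hM : M.trace = M.toBlocks₁₁.trace + M.toBlocks₂₂.trace := by
    conv_lhs => rw [← fromBlocks_toBlocks M]
    exact trace_fromBlocks' _ _ _ _
  rw [xiExt, trace_fromBlocks', hM]
  rw [trace_add, trace_smul, trace_one]
  have h1 : (Θ M.toBlocks₁₁).trace = (M.toBlocks₁₁ * dualMap Θ 1).trace := by
    rw [← dual_spec Θ M.toBlocks₁₁ 1, Matrix.mul_one]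
  rw [h1, Matrix.mul_sub, Matrix.mul_one, trace_sub]
  simp only [Fintype.card_unit, Nat.cast_one, smul_eq_mul, mul_one]
  ring

lemma xi_erasure (Θ : Matrix d d ℂ →ₗ[ℂ] Matrix d d ℂ)
    (Λ₁ Λ₂ Λd₁ Λd₂ : Matrix d d ℂ →ₗ[ℂ] Matrix d d ℂ)
    (hdual₁ : ∀ X Y : Matrix d d ℂ, (Λ₁ X * Y).trace = (X * Λd₁ Y).trace)
    (hdual₂ : ∀ X Y : Matrix d d ℂ, (Λ₂ X * Y).trace = (X * Λd₂ Y).trace)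
    (hcomp : ∀ ρ : Matrix d d ℂ, Θ (Λ₁ ρ) = Λ₂ ρ) (ρ : Matrix d d ℂ) :
    xiExt (⇑Θ) (⇑(dualMap Θ)) (erasureExt (⇑Λ₁) (⇑Λd₁) ρ) = erasureExt (⇑Λ₂) (⇑Λd₂) ρ := by
  rw [xiExt, erasureExt, erasureExt]
  rw [toBlocks_fromBlocks₁₁, toBlocks_fromBlocks₂₂]
  rw [hcomp]
  congr 1
  rw [← add_smul]
  congr 1
  have e1 : ((1 - Λd₁ 1) * ρ).trace = ρ.trace - (Λ₁ ρ).trace := by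
    rw [Matrix.sub_mul, Matrix.one_mul, trace_sub]
    congr 1
    rw [trace_mul_comm, ← hdual₁ ρ 1, Matrix.mul_one]
  have e2 : ((Λ₁ ρ) * (1 - dualMap Θ 1)).trace = (Λ₁ ρ).trace - (Λ₂ ρ).trace := by
    rw [Matrix.mul_sub, Matrix.mul_one, trace_sub]
    congr 1
    rw [← dual_spec Θ (Λ₁ ρ) 1, hcomp, Matrix.mul_one]
  have e3 : ((1 - Λd₂ 1) * ρ).trace = ρ.trace - (Λ₂ ρ).trace := by
    rw [Matrix.sub_mul, Matrix.one_mul, trace_sub]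
    congr 1
    rw [trace_mul_comm, ← hdual₂ ρ 1, Matrix.mul_one]
  rw [e1, e2, e3]
  ring


end Stmt16Aux


/-- If `{Λ(t)}` is CP-divisible by CP trace-nonincreasing maps `Θ(t₂,t₁)`, then the
generalized erasure family `Γ_{Λ(t)}` is CP-divisible by the completely positive
trace-preserving maps `Ξ(t₂,t₁)` built from `Θ(t₂,t₁)`. -/
theorem stmt16 {d : Type*} [Fintype d] [DecidableEq d]
    (Λ Λd : ℝ → (Matrix d d ℂ →ₗ[ℂ] Matrix d d ℂ))
    (hCP : ∀ t, 0 ≤ t → IsCompletelyPositive (⇑(Λ t)))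
    (hTNI : ∀ t, 0 ≤ t → IsTraceNonincreasing (⇑(Λ t)))
    (hdualΛ : ∀ t, 0 ≤ t → ∀ X Y : Matrix d d ℂ,
      (Λ t X * Y).trace = (X * Λd t Y).trace)
    (hdiv : ∀ t₁ t₂ : ℝ, 0 ≤ t₁ → t₁ ≤ t₂ →
      ∃ Θ : Matrix d d ℂ →ₗ[ℂ] Matrix d d ℂ,
        IsCompletelyPositive (⇑Θ) ∧ IsTraceNonincreasing (⇑Θ) ∧ Λ t₂ = Θ ∘ₗ Λ t₁) :
    ∀ t₁ t₂ : ℝ, 0 ≤ t₁ → t₁ ≤ t₂ →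
      ∃ Θ Θd : Matrix d d ℂ →ₗ[ℂ] Matrix d d ℂ,
        IsCompletelyPositive (⇑Θ) ∧ IsTraceNonincreasing (⇑Θ) ∧
        (∀ X Y : Matrix d d ℂ, (Θ X * Y).trace = (X * Θd Y).trace) ∧
        Λ t₂ = Θ ∘ₗ Λ t₁ ∧
        IsCompletelyPositive (xiExt (⇑Θ) (⇑Θd)) ∧
        (∀ M : Matrix (d ⊕ Unit) (d ⊕ Unit) ℂ, (xiExt (⇑Θ) (⇑Θd) M).trace = M.trace) ∧
        (∀ ρ : Matrix d d ℂ,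
          xiExt (⇑Θ) (⇑Θd) (erasureExt (⇑(Λ t₁)) (⇑(Λd t₁)) ρ)
            = erasureExt (⇑(Λ t₂)) (⇑(Λd t₂)) ρ) := by
  intro t₁ t₂ ht₁ ht₁₂
  obtain ⟨Θ, hΘcp, hΘtni, hΘcomp⟩ := hdiv t₁ t₂ ht₁ ht₁₂
  have ht₂ : 0 ≤ t₂ := le_trans ht₁ ht₁₂
  have hcomp' : ∀ ρ : Matrix d d ℂ, Θ (Λ t₁ ρ) = Λ t₂ ρ := fun ρ => by
    rw [hΘcomp]; rfl
  exact ⟨Θ, Stmt16Aux.dualMap Θ, hΘcp, hΘtni, Stmt16Aux.dual_spec Θ, hΘcomp,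
    Stmt16Aux.xi_cp hΘcp hΘtni, Stmt16Aux.xi_trace Θ,
    Stmt16Aux.xi_erasure Θ (Λ t₁) (Λ t₂) (Λd t₁) (Λd t₂)
      (hdualΛ t₁ ht₁) (hdualΛ t₂ ht₂) hcomp'⟩
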